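/- (General-rate mistake bound for M-PRIL.) Let ‖x^t‖_∞ ≤ 1 for all t ∈ [T], c = min_{t∈[T]} (y_r^t − y_l^t), and c₁ = K − c − 1 ≥ 1. Suppose there exist γ > 0, w* ∈ ℝ^d and θ* ∈ ℝ^{K−1} with nonnegative entries and ‖w*‖₁ + ‖θ*‖₁ = 1 such that z_i^t(w*·x^t − θ_i*) ≥ γ for all i ∈ Ī^t and all t ∈ [T]. Then for any learning rate η > 0 satisfying η γ > log((e^{η c₁} + e^{−η c₁})/2), the M-PRIL iterates satisfy Σ_{t=1}^T m^t ≤ log(K + d − 1) / (η γ − log((e^{η c₁} + e^{−η c₁})/2)), where m^t = |{i ∈ Ī^t : z_i^t(w^t·x^t − θ_i^t) ≤ 0}|. -/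

import Mathlib

open Finset

noncomputable def dotp {d : ℕ} (w x : Fin d → ℝ) : ℝ := ∑ i, w i * x i

noncomputable def zval (yl : ℕ) (i : ℕ) : ℝ := if i < yl then 1 else -1

def Ibar (K yl yr : ℕ) : Finset ℕ := Finset.Icc 1 (yl - 1) ∪ Finset.Icc yr (K - 1)

noncomputable def tau {d : ℕ} (K yl yr : ℕ) (x w : Fin d → ℝ) (θ : ℕ → ℝ) (i : ℕ) : ℝ :=
  if i ∈ Ibar K yl yr ∧ zval yl i * (dotp w x - θ i) ≤ 0 then zval yl i else 0

noncomputable def LMAE (K : ℕ) (f : ℝ) (θ : ℕ → ℝ) (yl yr : ℕ) : ℝ :=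
  (∑ i ∈ Finset.Icc 1 (yl - 1), if f < θ i then (1:ℝ) else 0) +
  (∑ i ∈ Finset.Icc yr (K - 1), if θ i ≤ f then (1:ℝ) else 0)

noncomputable def LIMC (K : ℕ) (f : ℝ) (yl yr : ℕ) (θ : ℕ → ℝ) : ℝ :=
  (∑ i ∈ Finset.Icc 1 (yl - 1), max 0 (θ i - f)) +
  (∑ i ∈ Finset.Icc yr (K - 1), max 0 (f - θ i))

noncomputable def mcount {d : ℕ} (K yl yr : ℕ) (x w : Fin d → ℝ) (θ : ℕ → ℝ) : ℕ :=
  ((Ibar K yl yr).filter (fun i => zval yl i * (dotp w x - θ i) ≤ 0)).card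

/-- Chord bound for the exponential on `[-b, b]`. -/
lemma mpril_chord (η b : ℝ) (hb : 0 < b) (s : ℝ) (hs : |s| ≤ b) :
    Real.exp (η * s) ≤ (Real.exp (η*b) + Real.exp (-(η*b)))/2
      + s / b * ((Real.exp (η*b) - Real.exp (-(η*b)))/2) := by
  obtain ⟨hs1, hs2⟩ := abs_le.mp hs
  set lam : ℝ := (b + s) / (2*b) with hlam
  have h0 : 0 ≤ lam := by apply div_nonneg <;> linarith
  have h1 : 0 ≤ 1 - lam := by
    have : lam ≤ 1 := by rw [hlam, div_le_one (by linarith)]; linarith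
    linarith
  have key := convexOn_exp.2 (Set.mem_univ (η*b)) (Set.mem_univ (-(η*b))) h0 h1 (by ring)
  simp only [smul_eq_mul] at key
  have harg : lam * (η*b) + (1 - lam) * (-(η*b)) = η * s := by
    rw [hlam]
    field_simp
    ring
  rw [harg] at key
  calc Real.exp (η*s) ≤ lam * Real.exp (η*b) + (1-lam) * Real.exp (-(η*b)) := key
    _ = (Real.exp (η*b) + Real.exp (-(η*b)))/2
      + s / b * ((Real.exp (η*b) - Real.exp (-(η*b)))/2) := by
        rw [hlam]
        field_simp
        ring

lemma mpril_coshge1 (a : ℝ) : (1:ℝ) ≤ (Real.exp a + Real.exp (-a))/2 := by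
  have h1 := Real.exp_pos a
  have h2 := Real.exp_pos (-a)
  have h3 : Real.exp a * Real.exp (-a) = 1 := by
    rw [← Real.exp_add]; simp
  nlinarith [sq_nonneg (Real.exp a - Real.exp (-a))]

lemma mpril_tel (f : ℕ → ℝ) (n : ℕ) :
    ∑ t ∈ Finset.Icc 1 n, (f (t+1) - f t) = f (n+1) - f 1 := by
  induction n with
  | zero => simp
  | succ n ih => rw [Finset.sum_Icc_succ_top (Nat.le_add_left 1 n), ih]; ring

lemma mpril_zval_abs (yl k : ℕ) : |zval yl k| = 1 := by
  unfold zval; split <;> simp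

lemma mpril_tau_abs {d : ℕ} (K yl yr : ℕ) (x w : Fin d → ℝ) (θ : ℕ → ℝ) (i : ℕ) :
    |tau K yl yr x w θ i| ≤ 1 := by
  unfold tau; split
  · rw [mpril_zval_abs]
  · simp

/-- General-rate mistake bound for M-PRIL. -/
theorem mpril_general_rate_mistake_bound
    {d K T : ℕ} (hd : 1 ≤ d) (hK : 2 ≤ K) (hT : 1 ≤ T)
    (x : ℕ → Fin d → ℝ) (yl yr : ℕ → ℕ)
    (hy : ∀ t ∈ Finset.Icc 1 T, 1 ≤ yl t ∧ yl t ≤ yr t ∧ yr t ≤ K)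
    (hx : ∀ t ∈ Finset.Icc 1 T, ∀ i, |x t i| ≤ 1)
    (c : ℕ)
    (hc : c = (Finset.Icc 1 T).inf' (Finset.nonempty_Icc.mpr hT)
      (fun t => yr t - yl t))
    (c₁ : ℝ) (hc1def : c₁ = (K : ℝ) - (c : ℝ) - 1) (hc1 : 1 ≤ c₁)
    (γ : ℝ) (hγ : 0 < γ)
    (ws : Fin d → ℝ) (θs : ℕ → ℝ)
    (hws : ∀ i, 0 ≤ ws i) (hθs : ∀ i ∈ Finset.Icc 1 (K-1), 0 ≤ θs i)
    (hnorm : (∑ i, |ws i|) + (∑ i ∈ Finset.Icc 1 (K-1), |θs i|) = 1)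
    (hmargin : ∀ t ∈ Finset.Icc 1 T, ∀ i ∈ Ibar K (yl t) (yr t),
      γ ≤ zval (yl t) i * (dotp ws (x t) - θs i))
    (η : ℝ) (hη : 0 < η)
    (hrate : Real.log ((Real.exp (η * c₁) + Real.exp (-(η * c₁))) / 2) < η * γ)
    (w : ℕ → Fin d → ℝ) (θ : ℕ → ℕ → ℝ)
    (hw1 : ∀ i, w 1 i = 1 / ((K : ℝ) + (d : ℝ) - 1))
    (hθ1 : ∀ j, θ 1 j = 1 / ((K : ℝ) + (d : ℝ) - 1))
    (Z : ℕ → ℝ)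
    (hZ : ∀ t ∈ Finset.Icc 1 T, Z t =
      (∑ i, w t i * Real.exp (η * x t i *
        ∑ k ∈ Finset.Icc 1 (K-1), tau K (yl t) (yr t) (x t) (w t) (θ t) k))
      + ∑ k ∈ Finset.Icc 1 (K-1),
          θ t k * Real.exp (-η * tau K (yl t) (yr t) (x t) (w t) (θ t) k))
    (hwrec : ∀ t ∈ Finset.Icc 1 T, ∀ i,
      w (t+1) i = w t i * Real.exp (η * x t i *
        ∑ k ∈ Finset.Icc 1 (K-1), tau K (yl t) (yr t) (x t) (w t) (θ t) k) / Z t)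
    (hθrec : ∀ t ∈ Finset.Icc 1 T, ∀ k,
      θ (t+1) k = θ t k * Real.exp (-η * tau K (yl t) (yr t) (x t) (w t) (θ t) k) / Z t) :
    (∑ t ∈ Finset.Icc 1 T, (mcount K (yl t) (yr t) (x t) (w t) (θ t) : ℝ))
      ≤ Real.log ((K : ℝ) + (d : ℝ) - 1)
        / (η * γ - Real.log ((Real.exp (η * c₁) + Real.exp (-(η * c₁))) / 2)) := by
  classical
  set N : ℝ := (K : ℝ) + (d : ℝ) - 1 with hNdef
  set C : ℝ := (Real.exp (η * c₁) + Real.exp (-(η * c₁))) / 2 with hCdef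
  have hKR : (2:ℝ) ≤ (K:ℝ) := by exact_mod_cast hK
  have hdR : (1:ℝ) ≤ (d:ℝ) := by exact_mod_cast hd
  have hN0 : 0 < N := by rw [hNdef]; linarith
  have hC1 : (1:ℝ) ≤ C := mpril_coshge1 (η * c₁)
  have hL0 : 0 ≤ Real.log C := Real.log_nonneg hC1
  have hΔ : 0 < η * γ - Real.log C := by linarith [hrate]
  have hcardθ : ((Finset.Icc 1 (K-1)).card : ℝ) = (K:ℝ) - 1 := by
    rw [Nat.card_Icc]
    have h1 : K - 1 + 1 - 1 = K - 1 := by omega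
    rw [h1, Nat.cast_sub (by omega), Nat.cast_one]
  have hsumstar : (∑ i, ws i) + (∑ k ∈ Finset.Icc 1 (K-1), θs k) = 1 := by
    rw [← hnorm]
    congr 1
    · exact Finset.sum_congr rfl fun i _ => (abs_of_nonneg (hws i)).symm
    · exact Finset.sum_congr rfl fun k hk => (abs_of_nonneg (hθs k hk)).symm
  -- invariant: positivity and normalization of the iterates
  have hinv : ∀ t, 1 ≤ t → t ≤ T + 1 →
      (∀ i, 0 < w t i) ∧ (∀ k, 0 < θ t k) ∧
      (∑ i, w t i) + (∑ k ∈ Finset.Icc 1 (K-1), θ t k) = 1 := by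
    intro t ht1
    induction t, ht1 using Nat.le_induction with
    | base =>
      intro _
      refine ⟨fun i => ?_, fun k => ?_, ?_⟩
      · rw [hw1 i]; exact div_pos one_pos hN0
      · rw [hθ1 k]; exact div_pos one_pos hN0
      · have h1 : ∑ i : Fin d, w 1 i = (d:ℝ) * (1/N) := by
          rw [Finset.sum_congr rfl (fun i _ => hw1 i), Finset.sum_const, nsmul_eq_mul,
            Finset.card_univ, Fintype.card_fin]
        have h2 : ∑ k ∈ Finset.Icc 1 (K-1), θ 1 k = ((K:ℝ)-1) * (1/N) := by
          rw [Finset.sum_congr rfl (fun k _ => hθ1 k), Finset.sum_const, nsmul_eq_mul, hcardθ]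
        rw [h1, h2]
        field_simp
        rw [hNdef]; ring
    | succ t ht1 ih =>
      intro ht2
      have htmem : t ∈ Finset.Icc 1 T := Finset.mem_Icc.mpr ⟨ht1, by omega⟩
      obtain ⟨hwp, hθp, hsum⟩ := ih (by omega)
      have hZpos : 0 < Z t := by
        rw [hZ t htmem]
        have hne : (Finset.univ : Finset (Fin d)).Nonempty := ⟨⟨0, hd⟩, Finset.mem_univ _⟩
        have h1 : 0 < ∑ i, w t i * Real.exp (η * x t i *
            ∑ k ∈ Finset.Icc 1 (K-1), tau K (yl t) (yr t) (x t) (w t) (θ t) k) :=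
          Finset.sum_pos (fun i _ => mul_pos (hwp i) (Real.exp_pos _)) hne
        have h2 : 0 ≤ ∑ k ∈ Finset.Icc 1 (K-1),
            θ t k * Real.exp (-η * tau K (yl t) (yr t) (x t) (w t) (θ t) k) :=
          Finset.sum_nonneg fun k _ => (mul_pos (hθp k) (Real.exp_pos _)).le
        linarith
      refine ⟨fun i => ?_, fun k => ?_, ?_⟩
      · rw [hwrec t htmem i]; exact div_pos (mul_pos (hwp i) (Real.exp_pos _)) hZpos
      · rw [hθrec t htmem k]; exact div_pos (mul_pos (hθp k) (Real.exp_pos _)) hZpos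
      · have h1 : ∑ i, w (t+1) i = (∑ i, w t i * Real.exp (η * x t i *
            ∑ k ∈ Finset.Icc 1 (K-1), tau K (yl t) (yr t) (x t) (w t) (θ t) k)) / Z t := by
          rw [Finset.sum_congr rfl fun i _ => hwrec t htmem i, ← Finset.sum_div]
        have h2 : ∑ k ∈ Finset.Icc 1 (K-1), θ (t+1) k = (∑ k ∈ Finset.Icc 1 (K-1),
            θ t k * Real.exp (-η * tau K (yl t) (yr t) (x t) (w t) (θ t) k)) / Z t := by
          rw [Finset.sum_congr rfl fun k _ => hθrec t htmem k, ← Finset.sum_div]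
        rw [h1, h2, ← add_div, ← hZ t htmem, div_self hZpos.ne']
  have hZpos : ∀ t ∈ Finset.Icc 1 T, 0 < Z t := by
    intro t htmem
    obtain ⟨ht1, htT⟩ := Finset.mem_Icc.mp htmem
    obtain ⟨hwp, hθp, _⟩ := hinv t ht1 (by omega)
    rw [hZ t htmem]
    have hne : (Finset.univ : Finset (Fin d)).Nonempty := ⟨⟨0, hd⟩, Finset.mem_univ _⟩
    have h1 : 0 < ∑ i, w t i * Real.exp (η * x t i *
        ∑ k ∈ Finset.Icc 1 (K-1), tau K (yl t) (yr t) (x t) (w t) (θ t) k) :=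
      Finset.sum_pos (fun i _ => mul_pos (hwp i) (Real.exp_pos _)) hne
    have h2 : 0 ≤ ∑ k ∈ Finset.Icc 1 (K-1),
        θ t k * Real.exp (-η * tau K (yl t) (yr t) (x t) (w t) (θ t) k) :=
      Finset.sum_nonneg fun k _ => (mul_pos (hθp k) (Real.exp_pos _)).le
    linarith
  -- the potential function
  set Φ : ℕ → ℝ := fun t => (∑ i, ws i * Real.log (w t i)) +
      ∑ k ∈ Finset.Icc 1 (K-1), θs k * Real.log (θ t k) with hΦdef
  -- per-step bound
  have hstep : ∀ t ∈ Finset.Icc 1 T,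
      (mcount K (yl t) (yr t) (x t) (w t) (θ t) : ℝ) * (η * γ - Real.log C)
        ≤ Φ (t+1) - Φ t := by
    intro t htmem
    obtain ⟨ht1, htT⟩ := Finset.mem_Icc.mp htmem
    obtain ⟨hwp, hθp, hsum⟩ := hinv t ht1 (by omega)
    obtain ⟨hyl1, hylr, hyrK⟩ := hy t htmem
    have hZt := hZ t htmem
    have hwr := hwrec t htmem
    have hθr := hθrec t htmem
    have hZp : 0 < Z t := hZpos t htmem
    set τf : ℕ → ℝ := tau K (yl t) (yr t) (x t) (w t) (θ t) with hτdef
    set S : ℝ := ∑ k ∈ Finset.Icc 1 (K-1), τf k with hSdef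
    set F : Finset ℕ := (Ibar K (yl t) (yr t)).filter
      (fun i => zval (yl t) i * (dotp (w t) (x t) - θ t i) ≤ 0) with hFdef
    have hmF : mcount K (yl t) (yr t) (x t) (w t) (θ t) = F.card := rfl
    have hsubI : Ibar K (yl t) (yr t) ⊆ Finset.Icc 1 (K-1) := by
      intro k hk
      simp only [Ibar, Finset.mem_union, Finset.mem_Icc] at hk ⊢
      omega
    have hFsub : F ⊆ Finset.Icc 1 (K-1) := (Finset.filter_subset _ _).trans hsubI
    have htau_sum : ∀ g : ℕ → ℝ,
        (∑ k ∈ Finset.Icc 1 (K-1), τf k * g k) = ∑ k ∈ F, zval (yl t) k * g k := by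
      intro g
      have h1 : ∀ k ∈ Finset.Icc 1 (K-1),
          τf k * g k = if k ∈ F then zval (yl t) k * g k else 0 := by
        intro k _
        by_cases hkF : k ∈ F
        · obtain ⟨hkI, hkc⟩ := Finset.mem_filter.mp hkF
          rw [hτdef]
          simp only [tau, if_pos (⟨hkI, hkc⟩ : _ ∧ _), if_pos hkF]
        · have hnot : ¬(k ∈ Ibar K (yl t) (yr t) ∧
              zval (yl t) k * (dotp (w t) (x t) - θ t k) ≤ 0) :=
            fun hc' => hkF (Finset.mem_filter.mpr hc')
          rw [hτdef]
          simp only [tau, if_neg hnot, if_neg hkF, zero_mul]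
      rw [Finset.sum_congr rfl h1, Finset.sum_ite_mem, Finset.inter_eq_right.mpr hFsub]
    have hS_F : S = ∑ k ∈ F, zval (yl t) k := by
      have h := htau_sum (fun _ => 1)
      simp only [mul_one] at h
      rw [hSdef, h]
    have hSabs : |S| ≤ (F.card : ℝ) := by
      rw [hS_F]
      calc |∑ k ∈ F, zval (yl t) k| ≤ ∑ k ∈ F, |zval (yl t) k| :=
            Finset.abs_sum_le_sum_abs _ _
        _ = ∑ k ∈ F, (1:ℝ) := Finset.sum_congr rfl fun k _ => mpril_zval_abs _ _
        _ = F.card := by simp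
    have hcardc1 : (F.card : ℝ) ≤ c₁ := by
      have h1 : F.card ≤ (yl t - 1) + (K - yr t) := by
        calc F.card ≤ (Ibar K (yl t) (yr t)).card :=
              Finset.card_le_card (Finset.filter_subset _ _)
          _ ≤ (Finset.Icc 1 (yl t - 1)).card + (Finset.Icc (yr t) (K-1)).card :=
              Finset.card_union_le _ _
          _ = (yl t - 1) + (K - yr t) := by
              rw [Nat.card_Icc, Nat.card_Icc]; omega
      have h2 : c ≤ yr t - yl t := hc ▸ Finset.inf'_le _ htmem
      have h3 : (yl t - 1) + (K - yr t) ≤ K - 1 - c := by omega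
      calc (F.card:ℝ) ≤ ((K - 1 - c : ℕ) : ℝ) := by exact_mod_cast le_trans h1 h3
        _ ≤ c₁ := by
            rw [Nat.cast_sub (by omega), Nat.cast_sub (by omega), Nat.cast_one, hc1def]
            linarith

    -- the potential difference identity
    have hΦdiff : Φ (t+1) - Φ t =
        η * (∑ k ∈ Finset.Icc 1 (K-1), τf k * (dotp ws (x t) - θs k)) - Real.log (Z t) := by
      have hlw : ∀ i, Real.log (w (t+1) i) =
          Real.log (w t i) + η * x t i * S - Real.log (Z t) := by
        intro i
        rw [hwr i, Real.log_div (mul_pos (hwp i) (Real.exp_pos _)).ne' hZp.ne',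
          Real.log_mul (hwp i).ne' (Real.exp_ne_zero _), Real.log_exp]
      have hlθ : ∀ k, Real.log (θ (t+1) k) =
          Real.log (θ t k) + (-η * τf k) - Real.log (Z t) := by
        intro k
        rw [hθr k, Real.log_div (mul_pos (hθp k) (Real.exp_pos _)).ne' hZp.ne',
          Real.log_mul (hθp k).ne' (Real.exp_ne_zero _), Real.log_exp]
      have e1 : ∑ i, ws i * Real.log (w (t+1) i)
          = (∑ i, ws i * Real.log (w t i)) + η * S * (∑ i, ws i * x t i)
            - Real.log (Z t) * (∑ i, ws i) := by
        calc ∑ i, ws i * Real.log (w (t+1) i)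
            = ∑ i, (ws i * Real.log (w t i) + η * S * (ws i * x t i)
                - Real.log (Z t) * ws i) :=
              Finset.sum_congr rfl fun i _ => by rw [hlw i]; ring
          _ = _ := by
              rw [Finset.sum_sub_distrib, Finset.sum_add_distrib, ← Finset.mul_sum,
                ← Finset.mul_sum]
      have e2 : ∑ k ∈ Finset.Icc 1 (K-1), θs k * Real.log (θ (t+1) k)
          = (∑ k ∈ Finset.Icc 1 (K-1), θs k * Real.log (θ t k))
            - η * (∑ k ∈ Finset.Icc 1 (K-1), θs k * τf k)
            - Real.log (Z t) * (∑ k ∈ Finset.Icc 1 (K-1), θs k) := by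
        calc ∑ k ∈ Finset.Icc 1 (K-1), θs k * Real.log (θ (t+1) k)
            = ∑ k ∈ Finset.Icc 1 (K-1), (θs k * Real.log (θ t k) - η * (θs k * τf k)
                - Real.log (Z t) * θs k) :=
              Finset.sum_congr rfl fun k _ => by rw [hlθ k]; ring
          _ = _ := by
              rw [Finset.sum_sub_distrib, Finset.sum_sub_distrib, ← Finset.mul_sum,
                ← Finset.mul_sum]
      have e3 : ∑ k ∈ Finset.Icc 1 (K-1), τf k * (dotp ws (x t) - θs k)
          = S * dotp ws (x t) - ∑ k ∈ Finset.Icc 1 (K-1), θs k * τf k := by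
        rw [hSdef, Finset.sum_mul, ← Finset.sum_sub_distrib]
        exact Finset.sum_congr rfl fun k _ => by ring
      have hdp : dotp ws (x t) = ∑ i, ws i * x t i := rfl
      simp only [hΦdef]
      rw [e1, e2, e3, hdp]
      linear_combination (- Real.log (Z t)) * hsumstar
    -- margin lower bound
    have hAm : γ * (F.card:ℝ) ≤ ∑ k ∈ Finset.Icc 1 (K-1), τf k * (dotp ws (x t) - θs k) := by
      rw [htau_sum]
      calc γ * (F.card:ℝ) = ∑ _k ∈ F, γ := by rw [Finset.sum_const, nsmul_eq_mul]; ring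
        _ ≤ ∑ k ∈ F, zval (yl t) k * (dotp ws (x t) - θs k) :=
          Finset.sum_le_sum fun k hk => hmargin t htmem k (Finset.mem_filter.mp hk).1
    rcases Nat.eq_zero_or_pos F.card with hm0 | hm1
    · -- no mistakes this round
      have hF : F = ∅ := Finset.card_eq_zero.mp hm0
      have hτ0 : ∀ k, τf k = 0 := by
        intro k
        have hnot : ¬(k ∈ Ibar K (yl t) (yr t) ∧
            zval (yl t) k * (dotp (w t) (x t) - θ t k) ≤ 0) := by
          intro hc'
          have : k ∈ F := Finset.mem_filter.mpr hc'
          rw [hF] at this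
          exact absurd this (Finset.notMem_empty k)
        rw [hτdef]
        simp only [tau, if_neg hnot]
      have hS0 : S = 0 := by rw [hSdef]; simp [hτ0]
      have hZ1 : Z t = 1 := by
        rw [hZt]
        simp only [hS0, hτ0, mul_zero, Real.exp_zero, mul_one]
        exact hsum
      have hτsum0 : ∑ k ∈ Finset.Icc 1 (K-1), τf k * (dotp ws (x t) - θs k) = 0 := by
        simp [hτ0]
      rw [hmF, hm0, hΦdiff, hτsum0, hZ1]
      simp
    · -- at least one mistake
      have hc1pos : (0:ℝ) < c₁ := lt_of_lt_of_le one_pos hc1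
      set Sh : ℝ := (Real.exp (η*c₁) - Real.exp (-(η*c₁)))/2 with hShdef
      have hSh : 0 ≤ Sh := by
        have : Real.exp (-(η*c₁)) ≤ Real.exp (η*c₁) := by
          apply Real.exp_le_exp.mpr
          nlinarith
        rw [hShdef]; linarith
      have habs_tau : ∀ k, |τf k| ≤ 1 := fun k => by
        rw [hτdef]; exact mpril_tau_abs _ _ _ _ _ _ _
      -- per-term chord bounds
      have hb1 : ∀ i : Fin d, w t i * Real.exp (η * x t i * S)
          ≤ w t i * (C + (x t i * S)/c₁ * Sh) := by
        intro i
        apply mul_le_mul_of_nonneg_left _ (hwp i).le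
        have habs : |x t i * S| ≤ c₁ := by
          rw [abs_mul]
          calc |x t i| * |S| ≤ 1 * c₁ :=
              mul_le_mul (hx t htmem i) (hSabs.trans hcardc1) (abs_nonneg _) zero_le_one
            _ = c₁ := one_mul _
        have hch := mpril_chord η c₁ hc1pos (x t i * S) habs
        rw [← hCdef, ← hShdef] at hch
        rw [mul_assoc]
        exact hch
      have hb2 : ∀ k, θ t k * Real.exp (-η * τf k)
          ≤ θ t k * (C + (-τf k)/c₁ * Sh) := by
        intro k
        apply mul_le_mul_of_nonneg_left _ (hθp k).le
        have habs : |(-τf k)| ≤ c₁ := by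
          rw [abs_neg]; exact (habs_tau k).trans hc1
        have hch := mpril_chord η c₁ hc1pos (-τf k) habs
        rw [← hCdef, ← hShdef] at hch
        rw [show -η * τf k = η * (-τf k) by ring]
        exact hch
      -- bound the normalizer
      have hBexp : ∑ k ∈ Finset.Icc 1 (K-1), τf k * (dotp (w t) (x t) - θ t k)
          = S * dotp (w t) (x t) - ∑ k ∈ Finset.Icc 1 (K-1), θ t k * τf k := by
        rw [hSdef, Finset.sum_mul, ← Finset.sum_sub_distrib]
        exact Finset.sum_congr rfl fun k _ => by ring
      have hB : ∑ k ∈ Finset.Icc 1 (K-1), τf k * (dotp (w t) (x t) - θ t k) ≤ 0 := by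
        rw [htau_sum]
        exact Finset.sum_nonpos fun k hk => (Finset.mem_filter.mp hk).2
      have hZC : Z t ≤ C := by
        have hdpw : dotp (w t) (x t) = ∑ i, w t i * x t i := rfl
        have step1 : Z t ≤ (∑ i, w t i * (C + (x t i * S)/c₁ * Sh))
            + ∑ k ∈ Finset.Icc 1 (K-1), θ t k * (C + (-τf k)/c₁ * Sh) := by
          rw [hZt]
          exact add_le_add (Finset.sum_le_sum fun i _ => hb1 i)
            (Finset.sum_le_sum fun k _ => hb2 k)
        have step2 : (∑ i, w t i * (C + (x t i * S)/c₁ * Sh))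
            + ∑ k ∈ Finset.Icc 1 (K-1), θ t k * (C + (-τf k)/c₁ * Sh)
            = C * ((∑ i, w t i) + ∑ k ∈ Finset.Icc 1 (K-1), θ t k)
              + Sh/c₁ * ((∑ k ∈ Finset.Icc 1 (K-1), τf k * (dotp (w t) (x t) - θ t k))) := by
          rw [hBexp, hdpw]
          have e1 : ∑ i, w t i * (C + (x t i * S)/c₁ * Sh)
              = C * (∑ i, w t i) + Sh/c₁ * ((∑ i, w t i * x t i) * S) := by
            rw [Finset.mul_sum, Finset.sum_mul, Finset.mul_sum, ← Finset.sum_add_distrib]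
            refine Finset.sum_congr rfl fun i _ => ?_
            field_simp
          have e2 : ∑ k ∈ Finset.Icc 1 (K-1), θ t k * (C + (-τf k)/c₁ * Sh)
              = C * (∑ k ∈ Finset.Icc 1 (K-1), θ t k)
                - Sh/c₁ * (∑ k ∈ Finset.Icc 1 (K-1), θ t k * τf k) := by
            rw [Finset.mul_sum, Finset.mul_sum, ← Finset.sum_sub_distrib]
            refine Finset.sum_congr rfl fun k _ => ?_
            field_simp
            ring
          rw [e1, e2]
          ring
        have hShB : Sh/c₁ * (∑ k ∈ Finset.Icc 1 (K-1), τf k * (dotp (w t) (x t) - θ t k)) ≤ 0 :=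
          mul_nonpos_of_nonneg_of_nonpos (div_nonneg hSh hc1pos.le) hB
        calc Z t ≤ _ := step1
          _ = _ := step2
          _ ≤ C * 1 + 0 := by rw [hsum]; exact add_le_add le_rfl hShB
          _ = C := by ring
      have hlogZ : Real.log (Z t) ≤ Real.log C := Real.log_le_log hZp hZC
      rw [hmF, hΦdiff]
      have hm1' : (1:ℝ) ≤ (F.card:ℝ) := by exact_mod_cast hm1
      have key1 : η * (γ * (F.card:ℝ)) ≤ η * (∑ k ∈ Finset.Icc 1 (K-1),
          τf k * (dotp ws (x t) - θs k)) := mul_le_mul_of_nonneg_left hAm hη.le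
      have key2 : 0 ≤ ((F.card:ℝ) - 1) * Real.log C :=
        mul_nonneg (by linarith) hL0
      have expand : ((F.card:ℝ)) * (η * γ - Real.log C)
          = η * (γ * (F.card:ℝ)) - ((F.card:ℝ) - 1) * Real.log C - Real.log C := by ring
      rw [expand]
      linarith [key1, key2, hlogZ]
  -- telescoping and conclusion
  have htel := mpril_tel Φ T
  have hsum1 : (∑ t ∈ Finset.Icc 1 T, (mcount K (yl t) (yr t) (x t) (w t) (θ t) : ℝ))
      * (η * γ - Real.log C) ≤ Φ (T+1) - Φ 1 := by
    rw [← htel, Finset.sum_mul]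
    exact Finset.sum_le_sum hstep
  have hΦ1 : Φ 1 = -Real.log N := by
    simp only [hΦdef]
    have h1 : ∑ i, ws i * Real.log (w 1 i) = (∑ i, ws i) * Real.log (1/N) := by
      rw [Finset.sum_mul]
      exact Finset.sum_congr rfl fun i _ => by rw [hw1 i]
    have h2 : ∑ k ∈ Finset.Icc 1 (K-1), θs k * Real.log (θ 1 k)
        = (∑ k ∈ Finset.Icc 1 (K-1), θs k) * Real.log (1/N) := by
      rw [Finset.sum_mul]
      exact Finset.sum_congr rfl fun k _ => by rw [hθ1 k]
    rw [h1, h2, ← add_mul, hsumstar, one_mul, one_div, Real.log_inv]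
  have hΦT : Φ (T+1) ≤ 0 := by
    obtain ⟨hwp, hθp, hsum⟩ := hinv (T+1) (by omega) le_rfl
    have hwle : ∀ i, w (T+1) i ≤ 1 := by
      intro i
      have h1 : w (T+1) i ≤ ∑ j, w (T+1) j :=
        Finset.single_le_sum (fun j _ => (hwp j).le) (Finset.mem_univ i)
      have h2 : 0 ≤ ∑ k ∈ Finset.Icc 1 (K-1), θ (T+1) k :=
        Finset.sum_nonneg fun k _ => (hθp k).le
      linarith
    have hθle : ∀ k ∈ Finset.Icc 1 (K-1), θ (T+1) k ≤ 1 := by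
      intro k hk
      have h1 : θ (T+1) k ≤ ∑ j ∈ Finset.Icc 1 (K-1), θ (T+1) j :=
        Finset.single_le_sum (fun j _ => (hθp j).le) hk
      have h2 : 0 ≤ ∑ i, w (T+1) i := Finset.sum_nonneg fun i _ => (hwp i).le
      linarith
    simp only [hΦdef]
    apply add_nonpos
    · apply Finset.sum_nonpos
      intro i _
      have hl : Real.log (w (T+1) i) ≤ 0 := Real.log_nonpos (hwp i).le (hwle i)
      have := mul_le_mul_of_nonneg_left hl (hws i)
      simpa using this
    · apply Finset.sum_nonpos
      intro k hk
      have hl : Real.log (θ (T+1) k) ≤ 0 := Real.log_nonpos (hθp k).le (hθle k hk)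
      have := mul_le_mul_of_nonneg_left hl (hθs k hk)
      simpa using this
  have hfinal : (∑ t ∈ Finset.Icc 1 T, (mcount K (yl t) (yr t) (x t) (w t) (θ t) : ℝ))
      * (η * γ - Real.log C) ≤ Real.log N := by
    rw [hΦ1] at hsum1
    linarith
  exact (le_div_iff₀ hΔ).mpr hfinal
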